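/- Let c ∈ ℂ with Re c > 1/2 and let w ∈ ℂ. Then the Poisson formula holds: ∫_{−1}^{1} (1−t²)^{c−3/2} e^{tw} dt = Γ(c−1/2) √π · ∑_{j=0}^∞ (w²/4)^j / (Γ(c+j) j!), where (1−t²)^{c−3/2} is defined via the principal power of the positive real number 1−t² for −1 < t < 1; both sides are entire functions of w. -/

import Mathlib

open Complex MeasureTheory Set

lemma real_gamma_nat_add_half (j : ℕ) :
    Real.Gamma ((j : ℝ) + 1 / 2) =
      Real.sqrt Real.pi * (2 * j).factorial / (4 ^ j * j.factorial) := by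
  induction j with
  | zero => norm_num [Real.Gamma_one_half_eq]
  | succ k ih =>
    have hne : ((k : ℝ) + 1 / 2) ≠ 0 := by positivity
    have h1 : ((k + 1 : ℕ) : ℝ) + 1 / 2 = ((k : ℝ) + 1 / 2) + 1 := by push_cast; ring
    rw [h1, Real.Gamma_add_one hne, ih]
    have h2 : (2 * (k + 1)) = (2 * k + 1) + 1 := by ring
    rw [h2, Nat.factorial_succ, Nat.factorial_succ, Nat.factorial_succ]
    have h4 : (4 : ℝ) ^ (k + 1) = 4 * 4 ^ k := by ring
    push_cast
    have hk4 : (4 : ℝ) ^ k ≠ 0 := by positivity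
    have hkf : (k.factorial : ℝ) ≠ 0 := by positivity
    field_simp
    ring

lemma gamma_nat_add_half (j : ℕ) :
    Complex.Gamma ((j : ℂ) + 1 / 2) =
      (Real.sqrt Real.pi : ℂ) * ((2 * j).factorial : ℂ) / (4 ^ j * (j.factorial : ℂ)) := by
  have : ((j : ℂ) + 1 / 2) = (((j : ℝ) + 1 / 2 : ℝ) : ℂ) := by push_cast; ring
  rw [this, Complex.Gamma_ofReal, real_gamma_nat_add_half]
  push_cast
  ring

lemma sq_image_Ioo : (fun t : ℝ => t ^ 2) '' Ioo 0 1 = Ioo (0:ℝ) 1 := by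
  ext x
  constructor
  · rintro ⟨t, ⟨ht0, ht1⟩, rfl⟩
    refine ⟨by positivity, ?_⟩
    show t ^ 2 < 1
    nlinarith
  · rintro ⟨hx0, hx1⟩
    refine ⟨Real.sqrt x, ⟨Real.sqrt_pos.2 hx0, ?_⟩, Real.sq_sqrt hx0.le⟩
    rw [show (1:ℝ) = Real.sqrt 1 by simp]
    exact Real.sqrt_lt_sqrt hx0.le hx1

lemma cov_smul (c : ℂ) (j : ℕ) {t : ℝ} (ht : t ∈ Ioo (0:ℝ) 1) :
    |2 * t| • (((t ^ 2 : ℝ) : ℂ) ^ ((j:ℂ) + 1 / 2 - 1) *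
        (1 - ((t ^ 2 : ℝ) : ℂ)) ^ (c - 1 / 2 - 1))
      = 2 * (((1 - t ^ 2 : ℝ) : ℂ) ^ (c - 3 / 2) * (t:ℂ) ^ (2 * j)) := by
  obtain ⟨ht0, ht1⟩ := ht
  have htC : (t : ℂ) ≠ 0 := by exact_mod_cast ht0.ne'
  have h1 : ((t ^ 2 : ℝ) : ℂ) ^ ((j:ℂ) + 1 / 2 - 1)
      = (t:ℂ) ^ (2 * j) * (t:ℂ)⁻¹ := by
    have e1 : (t ^ 2 : ℝ) = t * t := by ring
    rw [e1, Complex.ofReal_mul, mul_cpow_ofReal_nonneg ht0.le ht0.le, ← Complex.cpow_add _ _ htC]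
    have e2 : (j:ℂ) + 1 / 2 - 1 + ((j:ℂ) + 1 / 2 - 1) = ((2 * j : ℕ) : ℂ) + (-1) := by
      push_cast; ring
    rw [e2, Complex.cpow_add _ _ htC, Complex.cpow_natCast, Complex.cpow_neg_one]
  have h2 : (1 - ((t ^ 2 : ℝ) : ℂ)) = ((1 - t ^ 2 : ℝ) : ℂ) := by push_cast; ring
  have h3 : (c - 1 / 2 - 1) = c - 3 / 2 := by ring
  rw [h1, h2, h3, abs_of_pos (by positivity : (0:ℝ) < 2 * t), Complex.real_smul]
  push_cast
  field_simp

lemma cov_key (c : ℂ) (hc : 1 / 2 < c.re) (j : ℕ) :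
    IntegrableOn (fun t : ℝ => ((1 - t ^ 2 : ℝ) : ℂ) ^ (c - 3 / 2) * (t:ℂ) ^ (2 * j))
        (Ioo 0 1) volume ∧
      ∫ t in Ioo (0:ℝ) 1, ((1 - t ^ 2 : ℝ) : ℂ) ^ (c - 3 / 2) * (t:ℂ) ^ (2 * j)
        = Complex.betaIntegral ((j:ℂ) + 1 / 2) (c - 1 / 2) / 2 := by
  set G : ℝ → ℂ := fun x => (x:ℂ) ^ ((j:ℂ) + 1 / 2 - 1) * (1 - (x:ℂ)) ^ (c - 1 / 2 - 1) with hGdef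
  have hu : 0 < ((j:ℂ) + 1 / 2).re := by
    simp only [Complex.add_re, Complex.natCast_re]
    norm_num
    positivity
  have hv : 0 < (c - 1 / 2).re := by
    simp only [Complex.sub_re]
    simp only [Complex.ofReal_re, Complex.div_re]
    norm_num
    linarith
  have hG : IntegrableOn G (Ioo 0 1) volume := by
    have := Complex.betaIntegral_convergent hu hv
    rw [intervalIntegrable_iff_integrableOn_Ioc_of_le (by norm_num : (0:ℝ) ≤ 1)] at this
    exact this.mono_set Ioo_subset_Ioc_self
  have hderiv : ∀ t ∈ Ioo (0:ℝ) 1,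
      HasDerivWithinAt (fun t : ℝ => t ^ 2) (2 * t) (Ioo 0 1) t := by
    intro t _
    simpa using (hasDerivAt_pow 2 t).hasDerivWithinAt
  have hinj : InjOn (fun t : ℝ => t ^ 2) (Ioo 0 1) := by
    intro a ha b hb h
    simp only at h
    nlinarith [ha.1, hb.1]
  have hiff := integrableOn_image_iff_integrableOn_abs_deriv_smul
    measurableSet_Ioo hderiv hinj G
  have heq := integral_image_eq_integral_abs_deriv_smul
    measurableSet_Ioo hderiv hinj G
  rw [sq_image_Ioo] at hiff heq
  have hcong : ∀ t ∈ Ioo (0:ℝ) 1, |2 * t| • G (t ^ 2)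
      = 2 * (((1 - t ^ 2 : ℝ) : ℂ) ^ (c - 3 / 2) * (t:ℂ) ^ (2 * j)) := by
    intro t ht
    simpa [hGdef, Complex.ofReal_pow] using cov_smul c j ht
  constructor
  · have h2 : IntegrableOn (fun t : ℝ =>
        2 * (((1 - t ^ 2 : ℝ) : ℂ) ^ (c - 3 / 2) * (t:ℂ) ^ (2 * j))) (Ioo 0 1) volume := by
      refine (hiff.mp hG).congr_fun ?_ measurableSet_Ioo
      intro t ht; exact hcong t ht
    have h3 : IntegrableOn (fun t : ℝ =>
        (1/2 : ℂ) * (2 * (((1 - t ^ 2 : ℝ) : ℂ) ^ (c - 3 / 2) * (t:ℂ) ^ (2 * j))))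
        (Ioo 0 1) volume := h2.const_mul (1/2 : ℂ)
    exact h3.congr_fun (fun t ht => by ring) measurableSet_Ioo
  · have hBeq : Complex.betaIntegral ((j:ℂ) + 1 / 2) (c - 1 / 2)
        = ∫ t in Ioo (0:ℝ) 1, G t := by
      rw [Complex.betaIntegral, intervalIntegral.integral_of_le (by norm_num : (0:ℝ) ≤ 1),
        integral_Ioc_eq_integral_Ioo]
    rw [hBeq, heq, setIntegral_congr_fun measurableSet_Ioo hcong]
    rw [integral_const_mul]
    ring

lemma even_comp_neg (c : ℂ) (j : ℕ) :
    (fun x : ℝ => ((1 - (-x) ^ 2 : ℝ) : ℂ) ^ (c - 3 / 2) * (((-x : ℝ)):ℂ) ^ (2 * j))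
      = fun t : ℝ => ((1 - t ^ 2 : ℝ) : ℂ) ^ (c - 3 / 2) * (t:ℂ) ^ (2 * j) := by
  funext x
  have h1 : ((-x : ℝ) : ℂ) ^ (2 * j) = ((x : ℝ) : ℂ) ^ (2 * j) := by
    push_cast
    exact Even.neg_pow ⟨j, by ring⟩ _
  rw [h1]
  norm_num

lemma even_int01 (c : ℂ) (hc : 1 / 2 < c.re) (j : ℕ) :
    IntervalIntegrable (fun t : ℝ => ((1 - t ^ 2 : ℝ) : ℂ) ^ (c - 3 / 2) * (t:ℂ) ^ (2 * j))
      volume 0 1 := by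
  rw [intervalIntegrable_iff_integrableOn_Ioc_of_le (by norm_num : (0:ℝ) ≤ 1),
    integrableOn_Ioc_iff_integrableOn_Ioo]
  exact (cov_key c hc j).1

lemma even_intneg (c : ℂ) (hc : 1 / 2 < c.re) (j : ℕ) :
    IntervalIntegrable (fun t : ℝ => ((1 - t ^ 2 : ℝ) : ℂ) ^ (c - 3 / 2) * (t:ℂ) ^ (2 * j))
      volume (-1) 0 := by
  have := ((IntervalIntegrable.iff_comp_neg (by simp)).mp (even_int01 c hc j))
  rw [even_comp_neg c j] at this
  simpa using this.symm

lemma even_intInt (c : ℂ) (hc : 1 / 2 < c.re) (j : ℕ) :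
    IntervalIntegrable (fun t : ℝ => ((1 - t ^ 2 : ℝ) : ℂ) ^ (c - 3 / 2) * (t:ℂ) ^ (2 * j))
      volume (-1) 1 :=
  (even_intneg c hc j).trans (even_int01 c hc j)

lemma base_int (c : ℂ) (hc : 1 / 2 < c.re) (n : ℕ) :
    IntervalIntegrable (fun t : ℝ => ((1 - t ^ 2 : ℝ) : ℂ) ^ (c - 3 / 2) * (t:ℂ) ^ n)
      volume (-1) 1 := by
  have h1 : IntervalIntegrable
      (fun t : ℝ => (((1 - t ^ 2 : ℝ) : ℂ) ^ (c - 3 / 2) * (t:ℂ) ^ (2 * 0)) * (t:ℂ) ^ n)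
      volume (-1) 1 :=
    (even_intInt c hc 0).mul_continuousOn (Continuous.continuousOn (by continuity))
  simpa using h1

lemma I_even_val (c : ℂ) (hc : 1 / 2 < c.re) (j : ℕ) :
    ∫ t in (-1:ℝ)..1, ((1 - t ^ 2 : ℝ) : ℂ) ^ (c - 3 / 2) * (t:ℂ) ^ (2 * j)
      = Complex.Gamma ((j:ℂ) + 1 / 2) * Complex.Gamma (c - 1 / 2) / Complex.Gamma (c + j) := by
  have hu : 0 < ((j:ℂ) + 1 / 2).re := by
    simp only [Complex.add_re, Complex.natCast_re]
    norm_num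
    positivity
  have hv : 0 < (c - 1 / 2).re := by
    simp only [Complex.sub_re, Complex.ofReal_re, Complex.div_re]
    norm_num
    linarith
  set f : ℝ → ℂ := fun t => ((1 - t ^ 2 : ℝ) : ℂ) ^ (c - 3 / 2) * (t:ℂ) ^ (2 * j) with hf
  have hsplit : (∫ t in (-1:ℝ)..0, f t) + (∫ t in (0:ℝ)..1, f t) = ∫ t in (-1:ℝ)..1, f t :=
    intervalIntegral.integral_add_adjacent_intervals (even_intneg c hc j) (even_int01 c hc j)
  have hrefl : (∫ t in (-1:ℝ)..0, f t) = ∫ t in (0:ℝ)..1, f t := by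
    have hcn := intervalIntegral.integral_comp_neg (a := (0:ℝ)) (b := 1) (f := f)
    have : (fun x : ℝ => f (-x)) = f := by
      funext x
      simp only [hf]
      exact congrFun (even_comp_neg c j) x
    rw [this] at hcn
    simp only [neg_zero] at hcn
    exact hcn.symm
  have h01 : (∫ t in (0:ℝ)..1, f t) = Complex.betaIntegral ((j:ℂ) + 1 / 2) (c - 1 / 2) / 2 := by
    rw [intervalIntegral.integral_of_le (by norm_num : (0:ℝ) ≤ 1), integral_Ioc_eq_integral_Ioo]
    exact (cov_key c hc j).2
  have hB := Complex.Gamma_mul_Gamma_eq_betaIntegral hu hv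
  have hsum : (j:ℂ) + 1 / 2 + (c - 1 / 2) = c + j := by ring
  rw [hsum] at hB
  have hGne : Complex.Gamma (c + (j:ℂ)) ≠ 0 := by
    apply Complex.Gamma_ne_zero_of_re_pos
    simp only [Complex.add_re, Complex.natCast_re]
    have : (0:ℝ) ≤ j := Nat.cast_nonneg j
    linarith
  rw [← hsplit, hrefl, h01]
  rw [hB]
  field_simp
  ring

lemma I_odd_val (c : ℂ) (n : ℕ) (hn : Odd n) :
    ∫ t in (-1:ℝ)..1, ((1 - t ^ 2 : ℝ) : ℂ) ^ (c - 3 / 2) * (t:ℂ) ^ n = 0 := by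
  set f : ℝ → ℂ := fun t => ((1 - t ^ 2 : ℝ) : ℂ) ^ (c - 3 / 2) * (t:ℂ) ^ n with hf
  have hcn := intervalIntegral.integral_comp_neg (a := (-1:ℝ)) (b := 1) (f := f)
  simp only [neg_neg] at hcn
  have hodd : (fun x : ℝ => f (-x)) = fun x => -f x := by
    funext x
    simp only [hf]
    have h1 : ((-x : ℝ) : ℂ) ^ n = -(((x : ℝ) : ℂ) ^ n) := by
      push_cast
      exact Odd.neg_pow hn _
    rw [show ((-x) ^ 2 : ℝ) = x ^ 2 by ring, h1]
    ring
  rw [hodd, intervalIntegral.integral_neg] at hcn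
  have := hcn
  linear_combination (-1/2 : ℂ) * this

/-- the Poisson formula: for `Re c > 1/2` and any `w ∈ ℂ`,
`∫₋₁¹ (1-t²)^(c-3/2) e^(tw) dt = Γ(c-1/2) √π ∑ⱼ (w²/4)ʲ/(Γ(c+j) j!)`. -/
theorem poisson_formula (c w : ℂ) (hc : 1 / 2 < c.re) :
    (∫ t in (-1 : ℝ)..1,
        ((1 - t ^ 2 : ℝ) : ℂ) ^ (c - 3 / 2) * Complex.exp (t * w))
      = Complex.Gamma (c - 1 / 2) * (Real.sqrt Real.pi : ℂ) *
          ∑' j : ℕ, (w ^ 2 / 4) ^ j /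
            (Complex.Gamma (c + j) * (j.factorial : ℂ)) := by
  set base : ℝ → ℂ := fun t => ((1 - t ^ 2 : ℝ) : ℂ) ^ (c - 3 / 2) with hbase
  set F : ℕ → ℝ → ℂ := fun n t => base t * (t:ℂ) ^ n * (w ^ n / n.factorial) with hF
  -- pointwise expansion
  have hexp : ∀ t : ℝ, base t * Complex.exp ((t:ℂ) * w) = ∑' n, F n t := by
    intro t
    have he : Complex.exp ((t:ℂ) * w) = ∑' n : ℕ, ((t:ℂ) * w) ^ n / n.factorial := by
      rw [Complex.exp_eq_exp_ℂ, NormedSpace.exp_eq_tsum_div]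
    rw [he, ← tsum_mul_left]
    refine tsum_congr fun n => ?_
    simp only [hF, mul_pow]
    ring
  -- integrability facts
  have hIoc : ∀ n : ℕ, IntegrableOn (fun t : ℝ => base t * (t:ℂ) ^ n) (Ioc (-1) 1) volume := by
    intro n
    exact (intervalIntegrable_iff_integrableOn_Ioc_of_le (by norm_num : (-1:ℝ) ≤ 1)).mp
      (base_int c hc n)
  have hF_int : ∀ n : ℕ, IntegrableOn (F n) (Ioc (-1:ℝ) 1) volume := fun n =>
    (hIoc n).mul_const _
  have hgint : IntegrableOn (fun t : ℝ => ‖base t‖) (Ioc (-1:ℝ) 1) volume := by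
    have := (hIoc 0).norm
    simpa [IntegrableOn] using this
  set A : ℝ := ∫ t in Ioc (-1:ℝ) 1, ‖base t‖ with hA
  -- per-n norm bound
  have hbound : ∀ n : ℕ, (∫ t in Ioc (-1:ℝ) 1, ‖F n t‖)
      ≤ A * (‖w‖ ^ n / n.factorial) := by
    intro n
    have hle : ∀ᵐ t ∂(volume.restrict (Ioc (-1:ℝ) 1)),
        ‖F n t‖ ≤ ‖base t‖ * (‖w‖ ^ n / n.factorial) := by
      rw [ae_restrict_iff' measurableSet_Ioc]
      refine Filter.Eventually.of_forall fun t ht => ?_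
      have ht1 : |t| ≤ 1 := abs_le.mpr ⟨ht.1.le, ht.2⟩
      have : ‖F n t‖ = ‖base t‖ * |t| ^ n * (‖w‖ ^ n / n.factorial) := by
        simp only [hF, norm_mul, norm_div, norm_pow, Complex.norm_real,
          Real.norm_eq_abs, Complex.norm_natCast]
      rw [this]
      have h1 : |t| ^ n ≤ 1 := pow_le_one₀ (abs_nonneg t) ht1
      have h2 : (0:ℝ) ≤ ‖w‖ ^ n / n.factorial := by positivity
      have h3 := mul_le_mul_of_nonneg_right
        (mul_le_mul_of_nonneg_left h1 (norm_nonneg (base t))) h2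
      simpa using h3
    calc (∫ t in Ioc (-1:ℝ) 1, ‖F n t‖)
        ≤ ∫ t in Ioc (-1:ℝ) 1, ‖base t‖ * (‖w‖ ^ n / n.factorial) := by
          refine integral_mono_of_nonneg ?_ (hgint.mul_const _) hle
          exact Filter.Eventually.of_forall fun t => norm_nonneg _
      _ = A * (‖w‖ ^ n / n.factorial) := by rw [integral_mul_const]
  have hsumA : Summable fun n : ℕ => A * (‖w‖ ^ n / n.factorial) :=
    (Real.summable_pow_div_factorial ‖w‖).mul_left A
  have hF_sum : Summable fun n : ℕ => ∫ t in Ioc (-1:ℝ) 1, ‖F n t‖ := by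
    refine Summable.of_nonneg_of_le (fun n => ?_) hbound hsumA
    exact integral_nonneg fun t => norm_nonneg _
  -- swap sum and integral
  have hswap : (∫ t in Ioc (-1:ℝ) 1, base t * Complex.exp ((t:ℂ) * w))
      = ∑' n, ∫ t in Ioc (-1:ℝ) 1, F n t := by
    rw [show (fun t : ℝ => base t * Complex.exp ((t:ℂ) * w)) = fun t => ∑' n, F n t from
      funext hexp]
    exact (integral_tsum_of_summable_integral_norm hF_int hF_sum).symm
  -- identify each integral
  set a : ℕ → ℂ := fun n => (∫ t in (-1:ℝ)..1, base t * (t:ℂ) ^ n) * (w ^ n / n.factorial)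
    with ha
  have hFn : ∀ n : ℕ, (∫ t in Ioc (-1:ℝ) 1, F n t) = a n := by
    intro n
    simp only [ha, hF]
    rw [intervalIntegral.integral_of_le (by norm_num : (-1:ℝ) ≤ 1), ← integral_mul_const]
  -- summability of a
  have haSummable : Summable a := by
    refine Summable.of_norm (Summable.of_nonneg_of_le (fun n => norm_nonneg _)
      (fun n => ?_) hsumA)
    rw [ha]
    simp only [norm_mul]
    have h1 : ‖∫ t in (-1:ℝ)..1, base t * (t:ℂ) ^ n‖ ≤ A := by
      have h2 := intervalIntegral.norm_integral_le_integral_norm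
        (μ := volume) (f := fun t : ℝ => base t * (t:ℂ) ^ n) (by norm_num : (-1:ℝ) ≤ 1)
      refine h2.trans ?_
      rw [intervalIntegral.integral_of_le (by norm_num : (-1:ℝ) ≤ 1)]
      have hle2 : ∀ᵐ t ∂(volume.restrict (Ioc (-1:ℝ) 1)),
          ‖base t * (t:ℂ) ^ n‖ ≤ ‖base t‖ := by
        rw [ae_restrict_iff' measurableSet_Ioc]
        refine Filter.Eventually.of_forall fun t ht => ?_
        have ht1 : |t| ≤ 1 := abs_le.mpr ⟨ht.1.le, ht.2⟩
        rw [norm_mul]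
        have hp : ‖(t:ℂ) ^ n‖ ≤ 1 := by
          rw [norm_pow, Complex.norm_real, Real.norm_eq_abs]
          exact pow_le_one₀ (abs_nonneg t) ht1
        nlinarith [norm_nonneg (base t)]
      exact integral_mono_of_nonneg (Filter.Eventually.of_forall fun t => norm_nonneg _)
        hgint hle2
    have h3 : ‖w ^ n / (n.factorial : ℂ)‖ = ‖w‖ ^ n / n.factorial := by
      rw [norm_div, norm_pow, Complex.norm_natCast]
    rw [h3]
    have h4 : (0:ℝ) ≤ ‖w‖ ^ n / n.factorial := by positivity
    nlinarith [norm_nonneg (∫ t in (-1:ℝ)..1, base t * (t:ℂ) ^ n)]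
  -- even/odd split
  have hodd : ∀ k : ℕ, a (2 * k + 1) = 0 := by
    intro k
    simp only [ha]
    rw [I_odd_val c (2 * k + 1) ⟨k, by ring⟩, zero_mul]
  have hevenSummable : Summable fun k : ℕ => a (2 * k) :=
    haSummable.comp_injective fun x y h => by omega
  have hoddSummable : Summable fun k : ℕ => a (2 * k + 1) := by
    simp only [hodd]
    exact summable_zero
  have hsplit := tsum_even_add_odd hevenSummable hoddSummable
  -- final computation
  have hterm : ∀ k : ℕ, a (2 * k) = Complex.Gamma (c - 1 / 2) * (Real.sqrt Real.pi : ℂ) *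
      ((w ^ 2 / 4) ^ k / (Complex.Gamma (c + k) * (k.factorial : ℂ))) := by
    intro k
    simp only [ha]
    rw [I_even_val c hc k, gamma_nat_add_half k]
    have hGne : Complex.Gamma (c + (k:ℂ)) ≠ 0 := by
      apply Complex.Gamma_ne_zero_of_re_pos
      simp only [Complex.add_re, Complex.natCast_re]
      have : (0:ℝ) ≤ k := Nat.cast_nonneg k
      linarith
    have h2k : ((2 * k).factorial : ℂ) ≠ 0 := by exact_mod_cast (Nat.factorial_pos _).ne'
    have hk : ((k.factorial : ℕ) : ℂ) ≠ 0 := by exact_mod_cast (Nat.factorial_pos _).ne'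
    have h4 : ((4:ℂ) ^ k) ≠ 0 := by norm_num
    have hw : (w ^ 2 / 4) ^ k = w ^ (2 * k) / 4 ^ k := by
      rw [div_pow, pow_mul]
    rw [hw]
    field_simp
  calc (∫ t in (-1:ℝ)..1, base t * Complex.exp ((t:ℂ) * w))
      = ∑' n, a n := by
        rw [intervalIntegral.integral_of_le (by norm_num : (-1:ℝ) ≤ 1), hswap]
        exact tsum_congr hFn
    _ = (∑' k, a (2 * k)) + ∑' k, a (2 * k + 1) := hsplit.symm
    _ = ∑' k, a (2 * k) := by
        simp only [hodd, tsum_zero, add_zero]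
    _ = Complex.Gamma (c - 1 / 2) * (Real.sqrt Real.pi : ℂ) *
          ∑' j : ℕ, (w ^ 2 / 4) ^ j / (Complex.Gamma (c + j) * (j.factorial : ℂ)) := by
        rw [← tsum_mul_left]
        exact tsum_congr hterm
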